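/- There exist universal positive constants c, c', L0 such that for every integer L ≥ L0: E_{⌊cL⌋}(log, [L^{−2}, 1]) ≥ c'. -/

import Mathlib

open scoped BigOperators
open Real

noncomputable section

/-- Best uniform polynomial approximation error of `f` on `[a,b]` by polynomials of
degree at most `L`. -/
def bestApproxError (L : ℕ) (f : ℝ → ℝ) (a b : ℝ) : ℝ :=
  ⨅ p : {p : Polynomial ℝ // p.natDegree ≤ L},
    ⨆ x : Set.Icc a b, |f ↑x - Polynomial.eval (↑x : ℝ) p.1|

section Aux

open Polynomial Polynomial.Chebyshev Finset Real

lemma T_eval_cosh' (n : ℕ) (t : ℝ) :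
    (T ℝ (n:ℤ)).eval (Real.cosh t) = Real.cosh (n * t) := by
  apply Complex.ofReal_injective
  calc (((T ℝ (n:ℤ)).eval (Real.cosh t) : ℝ) : ℂ)
      = (T ℂ (n:ℤ)).eval ((Real.cosh t : ℝ) : ℂ) := complex_ofReal_eval_T _ _
    _ = (T ℂ (n:ℤ)).eval (Complex.cos (t * Complex.I)) := by
        rw [Complex.ofReal_cosh, Complex.cos_mul_I]
    _ = Complex.cos ((n:ℤ) * (t * Complex.I)) := T_complex_cos _ _
    _ = Complex.cos (((n * t : ℝ) : ℂ) * Complex.I) := by push_cast; ring_nf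
    _ = Complex.cosh ((n * t : ℝ) : ℂ) := Complex.cos_mul_I _
    _ = ((Real.cosh (n * t) : ℝ) : ℂ) := (Complex.ofReal_cosh _).symm

lemma T_eval_neg' (n : ℕ) (x : ℝ) :
    (T ℝ (n:ℤ)).eval (-x) = (-1 : ℝ) ^ n * (T ℝ (n:ℤ)).eval x := by
  induction n using Nat.twoStepInduction generalizing x with
  | zero => simp
  | one => simp
  | more n ih1 ih2 =>
    have h : ((n:ℤ) + 2) = ((n+2 : ℕ) : ℤ) := by push_cast; ring
    have hrec : T ℝ ((n+2 : ℕ) : ℤ) = 2 * X * T ℝ ((n:ℤ) + 1) - T ℝ (n:ℤ) := by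
      rw [← h]; exact T_add_two ℝ (n:ℤ)
    have h1 : ((n:ℤ) + 1) = ((n+1 : ℕ) : ℤ) := by push_cast; ring
    rw [hrec, h1]
    simp only [eval_sub, eval_mul, eval_X, eval_ofNat, ih1, ih2]
    ring

lemma natDegree_T_le : ∀ n : ℕ, (T ℝ (n:ℤ)).natDegree ≤ n := by
  intro n
  induction n using Nat.twoStepInduction with
  | zero => simp [T_zero]
  | one => simp [T_one]
  | more n ih1 ih2 =>
    have h : ((n:ℤ) + 2) = ((n+2 : ℕ) : ℤ) := by push_cast; ring
    have hrec : T ℝ ((n+2 : ℕ) : ℤ) = 2 * X * T ℝ ((n:ℤ) + 1) - T ℝ (n:ℤ) := by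
      rw [← h]; exact T_add_two ℝ (n:ℤ)
    have h1 : ((n:ℤ) + 1) = ((n+1 : ℕ) : ℤ) := by push_cast; ring
    rw [hrec, h1]
    refine le_trans (natDegree_sub_le _ _) (max_le ?_ (le_trans ih1 (by omega)))
    refine le_trans natDegree_mul_le ?_
    have hx : (2 * X : Polynomial ℝ).natDegree ≤ 1 := le_trans natDegree_mul_le (by simp)
    omega

set_option maxHeartbeats 1000000 in
lemma cheb_bound (d : ℕ) (hd : 1 ≤ d) (r t : ℝ) (hr : 0 < r) (ht : 0 < t)
    (q : Polynomial ℝ) (hq : q.natDegree ≤ d) (M : ℝ)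
    (hM : ∀ x ∈ Set.Icc (r * (Real.cosh t - 1)) (r * (Real.cosh t + 1)), |q.eval x| ≤ M) :
    |q.eval 0| ≤ M * Real.cosh (d * t) := by
  set z := Real.cosh t with hz
  have hz1 : 1 < z := Real.one_lt_cosh.mpr (ne_of_gt ht)
  have hdR : (0:ℝ) < d := by exact_mod_cast hd
  set v : Fin (d+1) → ℝ := fun i => r * (z + Real.cos ((i:ℕ) * π / d)) with hv
  have hθmem : ∀ i : Fin (d+1), ((i:ℕ) * π / d : ℝ) ∈ Set.Icc 0 π := by
    intro i
    constructor
    · positivity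
    · rw [div_le_iff₀ hdR]
      have : ((i:ℕ):ℝ) ≤ d := by exact_mod_cast Fin.is_le i
      nlinarith [Real.pi_pos]
  have hmono : ∀ i j : Fin (d+1), i < j → v j < v i := by
    intro i j hij
    have hcast : ((i:ℕ):ℝ) < ((j:ℕ):ℝ) := by exact_mod_cast hij
    have hθ : ((i:ℕ) * π / d : ℝ) < ((j:ℕ) * π / d) := by
      have hπ := Real.pi_pos
      gcongr
    have := Real.strictAntiOn_cos (hθmem i) (hθmem j) hθ
    simp only [hv]
    nlinarith
  have hvpos : ∀ i : Fin (d+1), 0 < v i := by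
    intro i
    have h1 : (-1:ℝ) ≤ Real.cos ((i:ℕ) * π / d) := Real.neg_one_le_cos _
    simp only [hv]
    nlinarith
  have hvmem : ∀ i : Fin (d+1), v i ∈ Set.Icc (r * (z - 1)) (r * (z + 1)) := by
    intro i
    have h1 : (-1:ℝ) ≤ Real.cos ((i:ℕ) * π / d) := Real.neg_one_le_cos _
    have h2 : Real.cos ((i:ℕ) * π / d) ≤ 1 := Real.cos_le_one _
    constructor <;> simp only [hv] <;> nlinarith
  have hM0 : 0 ≤ M := le_trans (abs_nonneg _) (hM _ (hvmem 0))
  have hinj : Set.InjOn v (univ : Finset (Fin (d+1))) := by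
    intro i _ j _ hij
    rcases lt_trichotomy i j with h | h | h
    · exact absurd hij (ne_of_gt (hmono i j h))
    · exact h
    · exact absurd hij (ne_of_lt (hmono j i h))
  have hcard : #(univ : Finset (Fin (d+1))) = d + 1 := by simp
  have hdeg : q.degree < (#(univ : Finset (Fin (d+1))) : WithBot ℕ) := by
    rw [hcard]
    exact lt_of_le_of_lt degree_le_natDegree (by exact_mod_cast Nat.lt_succ_of_le hq)
  set ℓ : Fin (d+1) → ℝ := fun i => (Lagrange.basis univ v i).eval 0 with hℓdef
  have hℓ : ∀ i, ℓ i = ∏ j ∈ univ.erase i, ((v i - v j)⁻¹ * (0 - v j)) := by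
    intro i
    simp [hℓdef, Lagrange.basis, Lagrange.basisDivisor, eval_prod]
  have hrep : q.eval 0 = ∑ i : Fin (d+1), q.eval (v i) * ℓ i := by
    conv_lhs => rw [Lagrange.eq_interpolate hinj hdeg]
    rw [Lagrange.interpolate_apply, eval_finset_sum]
    simp [hℓdef]
  -- sign computation
  have hsign : ∀ i : Fin (d+1), (-1:ℝ)^(d + (i:ℕ)) * ℓ i = |ℓ i| := by
    intro i
    have hprodsign : ∏ j ∈ univ.erase i, (if (j:ℕ) < (i:ℕ) then (1:ℝ) else -1)
        = (-1:ℝ)^(d + (i:ℕ)) := by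
      rw [← Finset.prod_filter_mul_prod_filter_not (univ.erase i) (fun j : Fin (d+1) => (j:ℕ) < (i:ℕ))]
      have e1 : ∏ j ∈ (univ.erase i).filter (fun j : Fin (d+1) => (j:ℕ) < (i:ℕ)),
          (if (j:ℕ) < (i:ℕ) then (1:ℝ) else -1) = 1 := by
        apply Finset.prod_eq_one
        intro j hj
        rw [if_pos (Finset.mem_filter.mp hj).2]
      have hset : (univ.erase i).filter (fun j : Fin (d+1) => ¬ ((j:ℕ) < (i:ℕ))) = Finset.Ioi i := by
        ext j
        simp only [Finset.mem_filter, Finset.mem_erase, Finset.mem_univ, and_true,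
          Finset.mem_Ioi, true_and, not_lt, Fin.lt_def, ← Fin.val_ne_iff]
        omega
      have e2 : ∏ j ∈ (univ.erase i).filter (fun j : Fin (d+1) => ¬ ((j:ℕ) < (i:ℕ))),
          (if (j:ℕ) < (i:ℕ) then (1:ℝ) else -1) = (-1:ℝ)^(d - (i:ℕ)) := by
        rw [Finset.prod_congr rfl (fun j hj => if_neg (Finset.mem_filter.mp hj).2),
          Finset.prod_const, hset, Fin.card_Ioi]
        norm_num
      rw [e1, e2, one_mul]
      have hile : (i:ℕ) ≤ d := Fin.is_le i
      have : d + (i:ℕ) = (d - (i:ℕ)) + 2 * (i:ℕ) := by omega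
      rw [this, pow_add, pow_mul]
      norm_num
    rw [hℓ, ← hprodsign, ← Finset.prod_mul_distrib]
    have : ∀ j ∈ univ.erase i,
        (if (j:ℕ) < (i:ℕ) then (1:ℝ) else -1) * ((v i - v j)⁻¹ * (0 - v j))
        = |(v i - v j)⁻¹ * (0 - v j)| := by
      intro j hj
      have hji : j ≠ i := (Finset.mem_erase.mp hj).1
      by_cases hlt : (j:ℕ) < (i:ℕ)
      · have h1 : v i < v j := hmono j i (Fin.lt_def.mpr hlt)
        have h2 : 0 < v j := hvpos j
        have hpos : 0 < (v i - v j)⁻¹ * (0 - v j) :=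
          mul_pos_of_neg_of_neg (inv_lt_zero.mpr (by linarith)) (by linarith)
        rw [if_pos hlt, one_mul, abs_of_pos hpos]
      · have hij' : i < j := by
          have : (i:ℕ) ≠ (j:ℕ) := fun h => hji (Fin.ext h.symm)
          exact Fin.lt_def.mpr (by omega)
        have h1 : v j < v i := hmono i j hij'
        have h2 : 0 < v j := hvpos j
        have hneg : (v i - v j)⁻¹ * (0 - v j) < 0 :=
          mul_neg_of_pos_of_neg (inv_pos.mpr (by linarith)) (by linarith)
        rw [if_neg hlt, abs_of_neg hneg]
        ring
    rw [Finset.prod_congr rfl this, ← Finset.abs_prod]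
  -- the comparison polynomial
  set R : Polynomial ℝ := C ((-1:ℝ)^d) * ((T ℝ (d:ℤ)).comp (C r⁻¹ * X - C z)) with hR
  have hRdeg : R.degree < (#(univ : Finset (Fin (d+1))) : WithBot ℕ) := by
    rw [hcard]
    have h1 : (C r⁻¹ * X - C z : Polynomial ℝ).natDegree ≤ 1 := by
      apply le_trans (natDegree_sub_le _ _)
      simp [natDegree_C_mul_X _ (inv_ne_zero (ne_of_gt hr))]
    have h2 : R.natDegree ≤ d := by
      apply le_trans (natDegree_mul_le)
      simp only [natDegree_C, zero_add]
      apply le_trans (natDegree_comp_le)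
      calc (T ℝ (d:ℤ)).natDegree * (C r⁻¹ * X - C z : Polynomial ℝ).natDegree
          ≤ (T ℝ (d:ℤ)).natDegree * 1 := by
            exact Nat.mul_le_mul_left _ h1
        _ ≤ d := by
            rw [mul_one]
            exact natDegree_T_le d
    exact lt_of_le_of_lt degree_le_natDegree (by exact_mod_cast Nat.lt_succ_of_le h2)
  have hReval : ∀ i ∈ (univ : Finset (Fin (d+1))), R.eval (v i) = (-1:ℝ)^(d + (i:ℕ)) := by
    intro i _
    have harg : r⁻¹ * v i - z = Real.cos ((i:ℕ) * π / d) := by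
      simp only [hv]
      field_simp
      ring
    simp only [hR, eval_mul, eval_C, eval_comp, eval_sub, eval_X]
    rw [harg, T_real_cos]
    have harg2 : ((d:ℤ):ℝ) * ((i:ℕ) * π / d) = (i:ℕ) * π - 0 := by
      push_cast
      field_simp
      ring
    rw [harg2, Real.cos_nat_mul_pi_sub, Real.cos_zero, mul_one, ← pow_add]
  have hkey : ∑ i : Fin (d+1), (-1:ℝ)^(d + (i:ℕ)) * ℓ i = Real.cosh (d * t) := by
    have h0 := Lagrange.eq_interpolate_of_eval_eq (fun i : Fin (d+1) => (-1:ℝ)^(d + (i:ℕ))) hinj hRdeg hReval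
    have h1 : R.eval 0 = ∑ i : Fin (d+1), (-1:ℝ)^(d + (i:ℕ)) * ℓ i := by
      conv_lhs => rw [h0]
      rw [Lagrange.interpolate_apply, eval_finset_sum]
      simp [hℓdef]
    rw [← h1]
    simp only [hR, eval_mul, eval_C, eval_comp, eval_sub, eval_X]
    rw [show r⁻¹ * 0 - z = -z by ring, T_eval_neg', hz, T_eval_cosh', ← mul_assoc, ← pow_add]
    have : Even (d + d) := ⟨d, rfl⟩
    rw [this.neg_one_pow, one_mul]
  calc |q.eval 0| = |∑ i : Fin (d+1), q.eval (v i) * ℓ i| := by rw [hrep]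
    _ ≤ ∑ i : Fin (d+1), |q.eval (v i) * ℓ i| := Finset.abs_sum_le_sum_abs _ _
    _ = ∑ i : Fin (d+1), |q.eval (v i)| * |ℓ i| := by simp [abs_mul]
    _ ≤ ∑ i : Fin (d+1), M * |ℓ i| := Finset.sum_le_sum
        (fun i _ => mul_le_mul_of_nonneg_right (hM _ (hvmem i)) (abs_nonneg _))
    _ = M * ∑ i : Fin (d+1), |ℓ i| := by rw [← Finset.mul_sum]
    _ = M * ∑ i : Fin (d+1), (-1:ℝ)^(d + (i:ℕ)) * ℓ i := by simp_rw [hsign]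
    _ = M * Real.cosh (d * t) := by rw [hkey]

end Aux

set_option maxHeartbeats 1000000 in
theorem approx_error_log_bounded_away :
    ∃ c c' : ℝ, ∃ L0 : ℕ, 0 < c ∧ 0 < c' ∧ 0 < L0 ∧
      ∀ L : ℕ, L0 ≤ L →
        c' ≤ bestApproxError ⌊c * (L : ℝ)⌋₊ Real.log (((L : ℝ)) ^ (2 : ℕ))⁻¹ 1 := by
  refine ⟨1, Real.log 2 / (2 * Real.exp 12), 2, one_pos,
    div_pos (Real.log_pos (by norm_num)) (by positivity), by norm_num, ?_⟩
  intro L hL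
  have hL1 : 1 ≤ L := le_trans (by norm_num) hL
  have hLR : (2:ℝ) ≤ (L:ℝ) := by exact_mod_cast hL
  have hLpos : (0:ℝ) < L := by linarith
  have hfloor : ⌊(1:ℝ) * ((L:ℕ):ℝ)⌋₊ = L := by rw [one_mul, Nat.floor_natCast]
  rw [hfloor]
  set δ : ℝ := (((L:ℝ)) ^ (2:ℕ))⁻¹ with hδ
  have hδpos : 0 < δ := by positivity
  have hδ1 : δ ≤ 1 := by
    rw [hδ]
    have h1 : (1:ℝ) ≤ ((L:ℝ))^(2:ℕ) := by nlinarith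
    exact inv_le_one_of_one_le₀ h1
  unfold bestApproxError
  have hne : Nonempty {p : Polynomial ℝ // p.natDegree ≤ L} := ⟨⟨0, by simp⟩⟩
  apply le_ciInf
  rintro ⟨p, hp⟩
  show Real.log 2 / (2 * Real.exp 12) ≤ ⨆ x : Set.Icc δ 1, |Real.log ↑x - Polynomial.eval (↑x:ℝ) p|
  set ε := ⨆ x : Set.Icc δ 1, |Real.log ↑x - Polynomial.eval (↑x:ℝ) p| with hε
  have hcont : ContinuousOn (fun x : ℝ => |Real.log x - Polynomial.eval x p|) (Set.Icc δ 1) := by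
    apply ContinuousOn.abs
    apply ContinuousOn.sub
    · apply Real.continuousOn_log.mono
      intro x hx
      simp only [Set.mem_compl_iff, Set.mem_singleton_iff]
      exact ne_of_gt (lt_of_lt_of_le hδpos hx.1)
    · exact (Polynomial.continuous p).continuousOn
  have hbdd : BddAbove (Set.range fun x : Set.Icc δ 1 => |Real.log ↑x - Polynomial.eval (↑x:ℝ) p|) := by
    have himage := (isCompact_Icc.image_of_continuousOn hcont).bddAbove
    rwa [Set.image_eq_range] at himage
  have hpt : ∀ x ∈ Set.Icc δ 1, |Real.log x - Polynomial.eval x p| ≤ ε := by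
    intro x hx
    exact le_ciSup hbdd (⟨x, hx⟩ : Set.Icc δ 1)
  have hεnn : 0 ≤ ε := le_trans (abs_nonneg _) (hpt 1 ⟨hδ1, le_refl 1⟩)
  set t : ℝ := 12 / (L:ℝ) with htdef
  have ht : 0 < t := by positivity
  set z := Real.cosh t with hzdef
  have hz1 : 1 + 72/(L:ℝ)^2 ≤ z := by
    have h1 : t/2 < Real.sinh (t/2) := Real.self_lt_sinh_iff.mpr (by positivity)
    have h2 : z = 2 * Real.sinh (t/2)^2 + 1 := by
      rw [hzdef, show t = 2*(t/2) by ring, Real.cosh_two_mul, Real.cosh_sq]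
      ring
    have h3 : t/2 = 6/(L:ℝ) := by rw [htdef]; ring
    have h4 : (0:ℝ) < (L:ℝ)^2 := by positivity
    have h5 : (6/(L:ℝ))^2 = 36/(L:ℝ)^2 := by ring
    have h6 : 0 < t/2 := by positivity
    have h7 : 0 < Real.sinh (t/2) + t/2 := by linarith
    have h8 : (t/2)^2 ≤ Real.sinh (t/2)^2 := by
      nlinarith [mul_pos (sub_pos.mpr h1) h7]
    have h9 : (t/2)^2 = 36/(L:ℝ)^2 := by rw [h3]; exact h5
    have h10 : 72/(L:ℝ)^2 = 2*(t/2)^2 := by rw [h9]; ring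
    linarith
  have h72 : (0:ℝ) < 72/(L:ℝ)^2 := by positivity
  have hzgt : 1 < z := by linarith
  set r : ℝ := 1/(2*(z+1)) with hrdef
  have hr : 0 < r := div_pos one_pos (by linarith)
  have hb : r * (z+1) = 1/2 := by
    have h0 : z + 1 ≠ 0 := by linarith
    rw [hrdef]
    field_simp
  have ha : δ ≤ r * (z-1) := by
    have key : 2*(z+1) ≤ (L:ℝ)^2 * (z-1) := by
      have hL2 : (4:ℝ) ≤ (L:ℝ)^2 := by nlinarith
      have hz1' : 72/(L:ℝ)^2 ≤ z - 1 := by linarith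
      have hpos2 : (0:ℝ) ≤ (L:ℝ)^2 - 2 := by linarith
      have hmul := mul_le_mul_of_nonneg_left hz1' hpos2
      have hid : ((L:ℝ)^2 - 2) * (72/(L:ℝ)^2) = 72 - 144/(L:ℝ)^2 := by
        field_simp
        ring
      have hdiv : 144/(L:ℝ)^2 ≤ 36 := by
        rw [div_le_iff₀ (by positivity)]
        nlinarith
      nlinarith [hmul, hid, hdiv, hzgt]
    have hrz : r * (z-1) = (z-1)/(2*(z+1)) := by rw [hrdef]; ring
    rw [hδ, hrz, inv_eq_one_div, div_le_div_iff₀ (by positivity) (by positivity)]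
    nlinarith
  have hapos : 0 < r * (z - 1) := mul_pos hr (by linarith)
  set q : Polynomial ℝ :=
    p.comp (Polynomial.C 2 * Polynomial.X) - p - Polynomial.C (Real.log 2) with hqdef
  have hqdeg : q.natDegree ≤ L := by
    have h1 : (p.comp (Polynomial.C 2 * Polynomial.X)).natDegree ≤ L := by
      refine le_trans Polynomial.natDegree_comp_le ?_
      rw [Polynomial.natDegree_C_mul_X (2:ℝ) two_ne_zero, mul_one]
      exact hp
    refine le_trans (Polynomial.natDegree_sub_le _ _) ?_
    refine max_le (le_trans (Polynomial.natDegree_sub_le _ _) (max_le h1 hp)) ?_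
    simp
  have hq0 : q.eval 0 = - Real.log 2 := by
    simp [hqdef, Polynomial.eval_comp]
  have hM : ∀ x ∈ Set.Icc (r*(Real.cosh t - 1)) (r*(Real.cosh t + 1)), |q.eval x| ≤ 2*ε := by
    rw [← hzdef]
    intro x hx
    obtain ⟨hx1, hx2⟩ := hx
    have hxpos : 0 < x := lt_of_lt_of_le hapos hx1
    have hx12 : x ≤ 1/2 := le_trans hx2 (le_of_eq hb)
    have hm1 : x ∈ Set.Icc δ 1 := ⟨le_trans ha hx1, by linarith⟩
    have hm2 : 2*x ∈ Set.Icc δ 1 := ⟨by nlinarith [le_trans ha hx1], by linarith⟩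
    have hlog : Real.log (2*x) = Real.log 2 + Real.log x :=
      Real.log_mul two_ne_zero (ne_of_gt hxpos)
    have heval : q.eval x
        = (Real.log x - Polynomial.eval x p) - (Real.log (2*x) - Polynomial.eval (2*x) p) := by
      simp only [hqdef, Polynomial.eval_sub, Polynomial.eval_comp, Polynomial.eval_mul,
        Polynomial.eval_C, Polynomial.eval_X]
      rw [hlog]
      ring
    rw [heval]
    calc |(Real.log x - Polynomial.eval x p) - (Real.log (2*x) - Polynomial.eval (2*x) p)|
        ≤ |Real.log x - Polynomial.eval x p| + |Real.log (2*x) - Polynomial.eval (2*x) p| :=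
          abs_sub _ _
      _ ≤ ε + ε := add_le_add (hpt x hm1) (hpt _ hm2)
      _ = 2*ε := by ring
  have hmain := cheb_bound L hL1 r t hr ht q hqdeg (2*ε) hM
  have heq : (L:ℝ) * t = 12 := by
    rw [htdef]
    field_simp
  rw [hq0, heq] at hmain
  have hlog2 : |(-Real.log 2)| = Real.log 2 := by
    rw [abs_neg, abs_of_pos (Real.log_pos (by norm_num))]
  rw [hlog2] at hmain
  have hcosh12 : Real.cosh 12 ≤ Real.exp 12 := by
    rw [Real.cosh_eq]
    have h := Real.exp_le_exp.mpr (show (-12:ℝ) ≤ 12 by norm_num)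
    linarith
  have hfin : Real.log 2 ≤ 2*ε * Real.exp 12 := by nlinarith
  rw [div_le_iff₀ (by positivity)]
  linarith
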